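/- A local picture language L is regional if and only if there exist finitely many simple regional tile sets θ₁, …, θₙ (n ≥ 1) such that L = ⋃_{1 ≤ i ≤ n} LOC(θᵢ). -/

import Mathlib

/-- The rectangle `{x..x'} × {y..y'}` of grid positions. -/
def rect (x y x' y' : ℕ) : Set (ℕ × ℕ) :=
  {q | x ≤ q.1 ∧ q.1 ≤ x' ∧ y ≤ q.2 ∧ q.2 ≤ y'}

/-- A subdomain of the domain `{1..m} × {1..n}` of an `m×n` picture. -/
def IsSubdomain (m n : ℕ) (d : Set (ℕ × ℕ)) : Prop :=
  ∃ x y x' y', 1 ≤ x ∧ x ≤ x' ∧ x' ≤ m ∧ 1 ≤ y ∧ y ≤ y' ∧ y' ≤ n ∧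
    d = rect x y x' y'

/-- `d` is a `C`-homogeneous region of the picture `f`. -/
def Homog {A : Type*} (f : ℕ × ℕ → A) (d : Set (ℕ × ℕ)) (C : A) : Prop :=
  ∀ q ∈ d, f q = C

/-- The two rectangles are horizontally or vertically adjacent (in either order). -/
def RectAdj (d e : Set (ℕ × ℕ)) : Prop :=
  ∃ x y x' y' u v u' v',
    d = rect x y x' y' ∧ e = rect u v u' v' ∧
    x ≤ x' ∧ y ≤ y' ∧ u ≤ u' ∧ v ≤ v' ∧
    ((v = y' + 1 ∧ u' ≥ x ∧ x' ≥ u) ∨ (u = x' + 1 ∧ v' ≥ y ∧ y' ≥ v) ∨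
     (y = v' + 1 ∧ x' ≥ u ∧ u' ≥ x) ∨ (x = u' + 1 ∧ y' ≥ v ∧ v' ≥ y))

/-- `π` is a partition of the region `D` into rectangles on which `f` is constant. -/
def IsHomogPartitionOn {A : Type*} (D : Set (ℕ × ℕ)) (f : ℕ × ℕ → A)
    (π : Set (Set (ℕ × ℕ))) : Prop :=
  (∀ d ∈ π, ∃ x y x' y', x ≤ x' ∧ y ≤ y' ∧ d = rect x y x' y') ∧
  (∀ d ∈ π, ∃ C, Homog f d C) ∧
  (⋃₀ π = D) ∧
  (∀ d ∈ π, ∀ e ∈ π, d ≠ e → d ∩ e = ∅)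

/-- `π` is a homogeneous partition of the whole `m×n` picture `f`. -/
def IsHomogPartition {A : Type*} (m n : ℕ) (f : ℕ × ℕ → A)
    (π : Set (Set (ℕ × ℕ))) : Prop :=
  (∀ d ∈ π, IsSubdomain m n d) ∧ IsHomogPartitionOn (rect 1 1 m n) f π

/-- Strong: adjacent parts carry different labels. -/
def StrongOn {A : Type*} (f : ℕ × ℕ → A) (π : Set (Set (ℕ × ℕ))) : Prop :=
  ∀ d ∈ π, ∀ e ∈ π, d ≠ e → RectAdj d e →
    ∀ C₁ C₂, Homog f d C₁ → Homog f e C₂ → C₁ ≠ C₂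

/-- Regional: distinct parts carry distinct labels. -/
def RegionalOn {A : Type*} (f : ℕ × ℕ → A) (π : Set (Set (ℕ × ℕ))) : Prop :=
  ∀ d ∈ π, ∀ e ∈ π, d ≠ e →
    ∀ C₁ C₂, Homog f d C₁ → Homog f e C₂ → C₁ ≠ C₂

/-- A (nonempty) picture over alphabet `A`. -/
structure Pic (A : Type*) where
  rows : ℕ
  cols : ℕ
  rows_pos : 0 < rows
  cols_pos : 0 < cols
  val : Fin rows → Fin cols → A

/-- A tile: a 2×2 picture over `A ∪ {#}`; `none` plays the role of the border
symbol `#`.  Components: (top-left, top-right, bottom-left, bottom-right). -/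
abbrev Tile (A : Type*) := Option A × Option A × Option A × Option A

/-- Pixel of the bordered picture `p̂`, with 1-based coordinates
`0 ≤ i ≤ rows+1`, `0 ≤ j ≤ cols+1`; the border carries `none` (i.e. `#`). -/
def Pic.bval {A : Type*} (p : Pic A) (i j : ℕ) : Option A :=
  if h : 1 ≤ i ∧ i ≤ p.rows ∧ 1 ≤ j ∧ j ≤ p.cols then
    some (p.val ⟨i - 1, by omega⟩ ⟨j - 1, by omega⟩)
  else none

/-- The set `⟦p̂⟧` of all 2×2 subblocks of the bordered picture `p̂`. -/
def Pic.tiles {A : Type*} (p : Pic A) : Set (Tile A) :=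
  {t | ∃ i j, i ≤ p.rows ∧ j ≤ p.cols ∧
    t = (p.bval i j, p.bval i (j + 1), p.bval (i + 1) j, p.bval (i + 1) (j + 1))}

/-- The local language defined by a tile set `θ`. -/
def LOC {A : Type*} (θ : Set (Tile A)) : Set (Pic A) :=
  {p | p.tiles ⊆ θ}

/-- Horizontal adjacency relation `H_θ` extracted from a tile set. -/
def Hrel {A : Type*} (θ : Set (Tile A)) (x y : Option A) : Prop :=
  x ≠ y ∧ ∃ t ∈ θ, (t.1 = x ∧ t.2.1 = y) ∨ (t.2.2.1 = x ∧ t.2.2.2 = y)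

/-- Vertical adjacency relation `V_θ` extracted from a tile set. -/
def Vrel {A : Type*} (θ : Set (Tile A)) (x y : Option A) : Prop :=
  x ≠ y ∧ ∃ t ∈ θ, (t.1 = x ∧ t.2.2.1 = y) ∨ (t.2.1 = x ∧ t.2.2.2 = y)

/-- `A_θ ∩ Σ² = (H_θ ∪ V_θ) ∩ Σ²`. -/
def Arel {A : Type*} (θ : Set (Tile A)) (a b : A) : Prop :=
  Hrel θ (some a) (some b) ∨ Vrel θ (some a) (some b)

/-- `A'_θ ∩ Σ² = (H_θ⁻¹ ∪ V_θ) ∩ Σ²`. -/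
def A'rel {A : Type*} (θ : Set (Tile A)) (a b : A) : Prop :=
  Hrel θ (some b) (some a) ∨ Vrel θ (some a) (some b)

/-- The incidence graph of a relation is acyclic: no directed cycle. -/
def RelAcyclic {α : Type*} (r : α → α → Prop) : Prop :=
  ∀ a, ¬ Relation.TransGen r a a

/-- A tile set is simple regional: the incidence graphs of both adjacency
relations `A_θ ∩ Σ²` and `A'_θ ∩ Σ²` are acyclic. -/
def SimpleRegional {A : Type*} (θ : Set (Tile A)) : Prop :=
  RelAcyclic (Arel θ) ∧ RelAcyclic (A'rel θ)

/-- The picture `p` (equivalently its bordered version `p̂`) is regional: it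
admits a homogeneous partition into rectangles with pairwise distinct labels. -/
def Pic.IsRegional {A : Type*} (p : Pic A) : Prop :=
  ∃ π, IsHomogPartition p.rows p.cols (fun q => p.bval q.1 q.2) π ∧
    RegionalOn (fun q => p.bval q.1 q.2) π

-- ############ auxiliary development ############

namespace PicAux

variable {A : Type*}

/-- the in-domain pixel value, as an element of `A`. -/
noncomputable def pix (p : Pic A) (i j : ℕ) : A :=
  (p.bval i j).getD (p.val ⟨0, p.rows_pos⟩ ⟨0, p.cols_pos⟩)

lemma bval_eq_pix (p : Pic A) {i j : ℕ} (h1 : 1 ≤ i) (h2 : i ≤ p.rows)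
    (h3 : 1 ≤ j) (h4 : j ≤ p.cols) : p.bval i j = some (pix p i j) := by
  unfold pix Pic.bval
  rw [dif_pos ⟨h1, h2, h3, h4⟩]
  rfl

lemma bval_some_dom (p : Pic A) {i j : ℕ} {a : A} (h : p.bval i j = some a) :
    1 ≤ i ∧ i ≤ p.rows ∧ 1 ≤ j ∧ j ≤ p.cols := by
  by_contra hc
  unfold Pic.bval at h
  rw [dif_neg hc] at h
  exact Option.some_ne_none a h.symm

lemma bval_some_pix (p : Pic A) {i j : ℕ} {a : A} (h : p.bval i j = some a) :
    pix p i j = a := by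
  obtain ⟨h1, h2, h3, h4⟩ := bval_some_dom p h
  rw [bval_eq_pix p h1 h2 h3 h4] at h
  exact Option.some_injective _ h

/-- horizontal step: adjacent distinct in-domain cells give `Hrel`. -/
lemma hstep {θ : Set (Tile A)} {p : Pic A} (hp : p.tiles ⊆ θ) {i j : ℕ}
    (h1 : 1 ≤ i) (h2 : i ≤ p.rows) (h3 : 1 ≤ j) (h4 : j + 1 ≤ p.cols)
    (hne : pix p i j ≠ pix p i (j + 1)) :
    Hrel θ (some (pix p i j)) (some (pix p i (j + 1))) := by
  refine ⟨by simpa using hne, (p.bval i j, p.bval i (j+1), p.bval (i+1) j, p.bval (i+1) (j+1)),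
    hp ⟨i, j, h2, by omega, rfl⟩, Or.inl ⟨?_, ?_⟩⟩
  · exact bval_eq_pix p h1 h2 h3 (by omega)
  · exact bval_eq_pix p h1 h2 (by omega) h4

/-- vertical step: adjacent distinct in-domain cells give `Vrel`. -/
lemma vstep {θ : Set (Tile A)} {p : Pic A} (hp : p.tiles ⊆ θ) {i j : ℕ}
    (h1 : 1 ≤ i) (h2 : i + 1 ≤ p.rows) (h3 : 1 ≤ j) (h4 : j ≤ p.cols)
    (hne : pix p i j ≠ pix p (i + 1) j) :
    Vrel θ (some (pix p i j)) (some (pix p (i + 1) j)) := by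
  refine ⟨by simpa using hne, (p.bval i j, p.bval i (j+1), p.bval (i+1) j, p.bval (i+1) (j+1)),
    hp ⟨i, j, by omega, h4, rfl⟩, Or.inl ⟨?_, ?_⟩⟩
  · exact bval_eq_pix p h1 (by omega) h3 h4
  · exact bval_eq_pix p (by omega) h2 h3 h4

/-- generic chain lemma. -/
lemma chain {R : A → A → Prop} (g : ℕ → A) :
    ∀ n, (∀ k, k < n → g k = g (k + 1) ∨ R (g k) (g (k + 1))) →
      Relation.ReflTransGen R (g 0) (g n) := by
  intro n
  induction n with
  | zero => intro _; exact Relation.ReflTransGen.refl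
  | succ n ih =>
    intro h
    have tail := ih (fun k hk => h k (by omega))
    rcases h n (by omega) with he | hr
    · rw [he] at tail; exact tail
    · exact tail.tail hr

end PicAux

namespace PicAux

variable {A : Type*}

lemma chainFwd {R : A → A → Prop} (g : ℕ → A) (j k : ℕ)
    (h : ∀ c, j ≤ c → c + 1 ≤ j + k → g c = g (c + 1) ∨ R (g c) (g (c + 1))) :
    Relation.ReflTransGen R (g j) (g (j + k)) := by
  exact chain (fun t => g (j + t)) k (fun t ht => h (j + t) (by omega) (by omega))

lemma chainBwd {R : A → A → Prop} (g : ℕ → A) (j k : ℕ)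
    (h : ∀ c, j ≤ c → c + 1 ≤ j + k → g c = g (c + 1) ∨ R (g (c + 1)) (g c)) :
    Relation.ReflTransGen R (g (j + k)) (g j) := by
  have main := chain (R := R) (fun t => g (j + k - t)) k ?_
  · have e : j + k - k = j := by omega
    rw [e] at main
    simpa using main
  · intro t ht
    show g (j + k - t) = g (j + k - (t + 1)) ∨ R (g (j + k - t)) (g (j + k - (t + 1)))
    have e1 : j + k - t = (j + k - (t + 1)) + 1 := by omega
    rw [e1]
    rcases h (j + k - (t + 1)) (by omega) (by omega) with he | hr
    · exact Or.inl he.symm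
    · exact Or.inr hr

lemma acyclic_flip {R : A → A → Prop} (h : RelAcyclic R) :
    RelAcyclic (flip R) := by
  intro a ha
  exact h a (Relation.transGen_swap.mp ha)

/-- close a chain through a distinct element into a cycle : contradiction. -/
lemma no_det {R : A → A → Prop} (hR : RelAcyclic R) {a x : A} (hne : x ≠ a)
    (h1 : Relation.ReflTransGen R a x) (h2 : Relation.ReflTransGen R x a) : False := by
  rcases Relation.reflTransGen_iff_eq_or_transGen.mp h1 with he | ht
  · exact hne he
  · exact hR a (ht.trans_left h2)

section Seg

variable {θ : Set (Tile A)} {p : Pic A}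

/-- Main segment lemma: if two in-domain cells carry the same symbol `a`, then all
cells on the L-path (row of the first cell, then column of the second) carry `a`. -/
lemma seg (hp : p.tiles ⊆ θ) (hA : RelAcyclic (Arel θ)) (hA' : RelAcyclic (A'rel θ))
    {i j i' j' : ℕ}
    (hi1 : 1 ≤ i) (hi2 : i ≤ p.rows) (hj1 : 1 ≤ j) (hj2 : j ≤ p.cols)
    (hi1' : 1 ≤ i') (hi2' : i' ≤ p.rows) (hj1' : 1 ≤ j') (hj2' : j' ≤ p.cols)
    (ha : pix p i' j' = pix p i j) :
    (∀ c, min j j' ≤ c → c ≤ max j j' → pix p i c = pix p i j) ∧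
    (∀ r, min i i' ≤ r → r ≤ max i i' → pix p r j' = pix p i j) := by
  set a := pix p i j with hadef
  have hAf : RelAcyclic (flip (Arel θ)) := acyclic_flip hA
  have hA'f : RelAcyclic (flip (A'rel θ)) := acyclic_flip hA'
  -- generic horizontal/vertical chain builders for the four relations
  -- rightward in row i: Arel and flip A'rel
  have rowR : ∀ (R : A → A → Prop), (∀ x y, Hrel θ (some x) (some y) → R x y) →
      ∀ c c', j ≤ c ∨ j' ≤ c → c ≤ c' → c' ≤ max j j' →
      Relation.ReflTransGen R (pix p i c) (pix p i c') := by
    intro R hRH c c' hc hcc' hc'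
    have hcod : c' = c + (c' - c) := by omega
    rw [hcod]
    apply chainFwd (fun t => pix p i t) c (c' - c)
    intro t ht1 ht2
    by_cases he : pix p i t = pix p i (t + 1)
    · exact Or.inl he
    · refine Or.inr (hRH _ _ (hstep hp hi1 hi2 (by omega) (by omega) he))
  have rowL : ∀ (R : A → A → Prop), (∀ x y, Hrel θ (some x) (some y) → R y x) →
      ∀ c c', j ≤ c ∨ j' ≤ c → c ≤ c' → c' ≤ max j j' →
      Relation.ReflTransGen R (pix p i c') (pix p i c) := by
    intro R hRH c c' hc hcc' hc'
    have hcod : c' = c + (c' - c) := by omega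
    rw [hcod]
    apply chainBwd (fun t => pix p i t) c (c' - c)
    intro t ht1 ht2
    by_cases he : pix p i t = pix p i (t + 1)
    · exact Or.inl he
    · refine Or.inr (hRH _ _ (hstep hp hi1 hi2 (by omega) (by omega) he))
  have colD : ∀ (R : A → A → Prop), (∀ x y, Vrel θ (some x) (some y) → R x y) →
      ∀ r r', i ≤ r ∨ i' ≤ r → r ≤ r' → r' ≤ max i i' →
      Relation.ReflTransGen R (pix p r j') (pix p r' j') := by
    intro R hRV r r' hr hrr' hr'
    have hrod : r' = r + (r' - r) := by omega
    rw [hrod]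
    apply chainFwd (fun t => pix p t j') r (r' - r)
    intro t ht1 ht2
    by_cases he : pix p t j' = pix p (t + 1) j'
    · exact Or.inl he
    · refine Or.inr (hRV _ _ (vstep hp (by omega) (by omega) hj1' hj2' he))
  have colU : ∀ (R : A → A → Prop), (∀ x y, Vrel θ (some x) (some y) → R y x) →
      ∀ r r', i ≤ r ∨ i' ≤ r → r ≤ r' → r' ≤ max i i' →
      Relation.ReflTransGen R (pix p r' j') (pix p r j') := by
    intro R hRV r r' hr hrr' hr'
    have hrod : r' = r + (r' - r) := by omega
    rw [hrod]
    apply chainBwd (fun t => pix p t j') r (r' - r)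
    intro t ht1 ht2
    by_cases he : pix p t j' = pix p (t + 1) j'
    · exact Or.inl he
    · refine Or.inr (hRV _ _ (vstep hp (by omega) (by omega) hj1' hj2' he))
  -- step providers for the four relations
  have hA_H : ∀ x y, Hrel θ (some x) (some y) → Arel θ x y := fun _ _ h => Or.inl h
  have hA_V : ∀ x y, Vrel θ (some x) (some y) → Arel θ x y := fun _ _ h => Or.inr h
  have hA'_H : ∀ x y, Hrel θ (some x) (some y) → A'rel θ y x := fun _ _ h => Or.inl h
  have hA'_V : ∀ x y, Vrel θ (some x) (some y) → A'rel θ x y := fun _ _ h => Or.inr h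
  have hAf_H : ∀ x y, Hrel θ (some x) (some y) → flip (Arel θ) y x := fun _ _ h => Or.inl h
  have hAf_V : ∀ x y, Vrel θ (some x) (some y) → flip (Arel θ) y x := fun _ _ h => Or.inr h
  have hA'f_H : ∀ x y, Hrel θ (some x) (some y) → flip (A'rel θ) x y := fun _ _ h => Or.inl h
  have hA'f_V : ∀ x y, Vrel θ (some x) (some y) → flip (A'rel θ) y x := fun _ _ h => Or.inr h
  constructor
  · -- horizontal segment, row i, between j and j'
    intro c hc1 hc2
    by_contra hbad
    rcases le_total j j' with hjj | hjj <;> rcases le_total i i' with hii | hii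
    · -- right, down : Arel
      have h1 := rowR _ hA_H j c (Or.inl le_rfl) (by omega) (by omega)
      have h2 := rowR _ hA_H c j' (Or.inl (by omega)) (by omega) (by omega)
      have h3 := colD _ hA_V i i' (Or.inl le_rfl) hii (by omega)
      rw [ha] at h3
      exact no_det hA hbad h1 (h2.trans h3)
    · -- right, up : flip A'rel
      have h1 := rowR _ hA'f_H j c (Or.inl le_rfl) (by omega) (by omega)
      have h2 := rowR _ hA'f_H c j' (Or.inl (by omega)) (by omega) (by omega)
      have h3 := colU _ hA'f_V i' i (Or.inr le_rfl) hii (by omega)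
      rw [ha] at h3
      exact no_det hA'f hbad h1 (h2.trans h3)
    · -- left, down : A'rel
      have h1 := rowL _ hA'_H c j (Or.inr (by omega)) (by omega) (by omega)
      have h2 := rowL _ hA'_H j' c (Or.inr le_rfl) (by omega) (by omega)
      have h3 := colD _ hA'_V i i' (Or.inl le_rfl) hii (by omega)
      rw [ha] at h3
      exact no_det hA' hbad h1 (h2.trans h3)
    · -- left, up : flip Arel
      have h1 := rowL _ hAf_H c j (Or.inr (by omega)) (by omega) (by omega)
      have h2 := rowL _ hAf_H j' c (Or.inr le_rfl) (by omega) (by omega)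
      have h3 := colU _ hAf_V i' i (Or.inr le_rfl) hii (by omega)
      rw [ha] at h3
      exact no_det hAf hbad h1 (h2.trans h3)
  · -- vertical segment, column j', between i and i'
    intro r hr1 hr2
    by_contra hbad
    rcases le_total j j' with hjj | hjj <;> rcases le_total i i' with hii | hii
    · -- right, down : Arel
      have h1 := rowR _ hA_H j j' (Or.inl le_rfl) hjj (by omega)
      have h2 := colD _ hA_V i r (Or.inl le_rfl) (by omega) (by omega)
      have h3 := colD _ hA_V r i' (Or.inl (by omega)) (by omega) (by omega)
      rw [ha] at h3
      exact no_det hA hbad (h1.trans h2) h3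
    · -- right, up : flip A'rel
      have h1 := rowR _ hA'f_H j j' (Or.inl le_rfl) hjj (by omega)
      have h2 := colU _ hA'f_V r i (Or.inr (by omega)) (by omega) (by omega)
      have h3 := colU _ hA'f_V i' r (Or.inr le_rfl) (by omega) (by omega)
      rw [ha] at h3
      exact no_det hA'f hbad (h1.trans h2) h3
    · -- left, down : A'rel
      have h1 := rowL _ hA'_H j' j (Or.inr le_rfl) hjj (by omega)
      have h2 := colD _ hA'_V i r (Or.inl le_rfl) (by omega) (by omega)
      have h3 := colD _ hA'_V r i' (Or.inl (by omega)) (by omega) (by omega)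
      rw [ha] at h3
      exact no_det hA' hbad (h1.trans h2) h3
    · -- left, up : flip Arel
      have h1 := rowL _ hAf_H j' j (Or.inr le_rfl) hjj (by omega)
      have h2 := colU _ hAf_V r i (Or.inr (by omega)) (by omega) (by omega)
      have h3 := colU _ hAf_V i' r (Or.inr le_rfl) (by omega) (by omega)
      rw [ha] at h3
      exact no_det hAf hbad (h1.trans h2) h3

end Seg

end PicAux


namespace PicAux

variable {A : Type*}

theorem regional_of_simpleRegional {θ : Set (Tile A)} (hsr : SimpleRegional θ)
    {p : Pic A} (hp : p.tiles ⊆ θ) : p.IsRegional := by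
  classical
  obtain ⟨hA, hA'⟩ := hsr
  set m := p.rows with hm
  set n := p.cols with hn
  have hm1 : 1 ≤ m := p.rows_pos
  have hn1 : 1 ≤ n := p.cols_pos
  set f : ℕ × ℕ → Option A := fun q => p.bval q.1 q.2 with hf
  -- occurrence rows/cols
  let rowsOf : A → Set ℕ := fun a => {r | ∃ c, 1 ≤ r ∧ r ≤ m ∧ 1 ≤ c ∧ c ≤ n ∧ pix p r c = a}
  let colsOf : A → Set ℕ := fun a => {c | ∃ r, 1 ≤ r ∧ r ≤ m ∧ 1 ≤ c ∧ c ≤ n ∧ pix p r c = a}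
  let i0 : A → ℕ := fun a => sInf (rowsOf a)
  let i1 : A → ℕ := fun a => sSup (rowsOf a)
  let j0 : A → ℕ := fun a => sInf (colsOf a)
  let j1 : A → ℕ := fun a => sSup (colsOf a)
  let occ : A → Prop := fun a => ∃ r c, 1 ≤ r ∧ r ≤ m ∧ 1 ≤ c ∧ c ≤ n ∧ pix p r c = a
  have hrBdd : ∀ a, BddAbove (rowsOf a) := by
    intro a; exact ⟨m, fun r hr => by obtain ⟨c, h⟩ := hr; omega⟩
  have hcBdd : ∀ a, BddAbove (colsOf a) := by
    intro a; exact ⟨n, fun c hc => by obtain ⟨r, h⟩ := hc; omega⟩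
  -- membership facts
  have hmem : ∀ a r c, 1 ≤ r → r ≤ m → 1 ≤ c → c ≤ n → pix p r c = a →
      i0 a ≤ r ∧ r ≤ i1 a ∧ j0 a ≤ c ∧ c ≤ j1 a := by
    intro a r c h1 h2 h3 h4 h5
    have hr : r ∈ rowsOf a := ⟨c, h1, h2, h3, h4, h5⟩
    have hc : c ∈ colsOf a := ⟨r, h1, h2, h3, h4, h5⟩
    exact ⟨Nat.sInf_le hr, le_csSup (hrBdd a) hr, Nat.sInf_le hc, le_csSup (hcBdd a) hc⟩
  have hwit : ∀ a, occ a →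
      (i0 a ∈ rowsOf a) ∧ (i1 a ∈ rowsOf a) ∧ (j0 a ∈ colsOf a) ∧ (j1 a ∈ colsOf a) := by
    rintro a ⟨r, c, h1, h2, h3, h4, h5⟩
    have hrne : (rowsOf a).Nonempty := ⟨r, c, h1, h2, h3, h4, h5⟩
    have hcne : (colsOf a).Nonempty := ⟨c, r, h1, h2, h3, h4, h5⟩
    exact ⟨Nat.sInf_mem hrne, Nat.sSup_mem hrne (hrBdd a), Nat.sInf_mem hcne,
      Nat.sSup_mem hcne (hcBdd a)⟩
  have hbnds : ∀ a, occ a → 1 ≤ i0 a ∧ i0 a ≤ i1 a ∧ i1 a ≤ m ∧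
      1 ≤ j0 a ∧ j0 a ≤ j1 a ∧ j1 a ≤ n := by
    intro a ha
    obtain ⟨h0, h1', h2, h3⟩ := hwit a ha
    obtain ⟨c0, hx⟩ := h0; obtain ⟨c1, hy⟩ := h1'
    obtain ⟨r0, hz⟩ := h2; obtain ⟨r1, hw⟩ := h3
    have b1 := (hmem a _ _ hy.1 hy.2.1 hy.2.2.1 hy.2.2.2.1 hy.2.2.2.2).1
    have b2 := (hmem a _ _ hw.1 hw.2.1 hw.2.2.1 hw.2.2.2.1 hw.2.2.2.2).2.2.1
    refine ⟨hx.1, b1, hy.2.1, hz.2.2.1, b2, hw.2.2.2.1⟩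
  -- the key rectangle lemma
  have key : ∀ a, occ a → ∀ r c, i0 a ≤ r → r ≤ i1 a → j0 a ≤ c → c ≤ j1 a →
      pix p r c = a := by
    intro a ha r c hr0 hr1 hc0 hc1
    obtain ⟨ht, hb, hl, hr⟩ := hwit a ha
    obtain ⟨bd1, bd2, bd3, bd4, bd5, bd6⟩ := hbnds a ha
    obtain ⟨ct, htd⟩ := ht
    obtain ⟨cb, hbd⟩ := hb
    obtain ⟨rl, hld⟩ := hl
    obtain ⟨rr, hrd⟩ := hr
    -- Step 1 : all cells (r, cb) for r ∈ [i0,i1] carry a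
    have step1 : pix p r cb = a := by
      have hseg := (seg hp hA hA' htd.1 htd.2.1 htd.2.2.1 htd.2.2.2.1
        hbd.1 hbd.2.1 hbd.2.2.1 hbd.2.2.2.1
        (by rw [htd.2.2.2.2, hbd.2.2.2.2])).2 r
        (by rw [min_eq_left bd2]; exact hr0) (by rw [max_eq_right bd2]; exact hr1)
      rw [htd.2.2.2.2] at hseg; exact hseg
    -- Step 2 : all cells (rl, c) for c ∈ [j0,j1] carry a
    have step2 : pix p rl c = a := by
      have hseg := (seg hp hA hA' hld.1 hld.2.1 hld.2.2.1 hld.2.2.2.1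
        hrd.1 hrd.2.1 hrd.2.2.1 hrd.2.2.2.1
        (by rw [hld.2.2.2.2, hrd.2.2.2.2])).1 c
        (by rw [min_eq_left bd5]; exact hc0) (by rw [max_eq_right bd5]; exact hc1)
      rw [hld.2.2.2.2] at hseg; exact hseg
    -- Step 3 : combine via the corner (r, c)
    have hseg := (seg hp hA hA' (by omega : 1 ≤ r) (by omega : r ≤ p.rows)
      hbd.2.2.1 hbd.2.2.2.1 hld.1 hld.2.1 (by omega : 1 ≤ c) (by omega : c ≤ p.cols)
      (by rw [step1, step2])).1 c (min_le_right _ _) (le_max_right _ _)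
    rw [step1] at hseg; exact hseg
  -- the partition
  refine ⟨{d | ∃ a, occ a ∧ d = rect (i0 a) (j0 a) (i1 a) (j1 a)}, ⟨?_, ?_, ?_, ?_, ?_⟩, ?_⟩
  · rintro d ⟨a, ha, rfl⟩
    obtain ⟨b1, b2, b3, b4, b5, b6⟩ := hbnds a ha
    exact ⟨i0 a, j0 a, i1 a, j1 a, b1, b2, b3, b4, b5, b6, rfl⟩
  · rintro d ⟨a, ha, rfl⟩
    obtain ⟨b1, b2, b3, b4, b5, b6⟩ := hbnds a ha
    exact ⟨i0 a, j0 a, i1 a, j1 a, b2, b5, rfl⟩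
  · rintro d ⟨a, ha, rfl⟩
    refine ⟨some a, ?_⟩
    rintro ⟨r, c⟩ ⟨hq1, hq2, hq3, hq4⟩
    obtain ⟨b1, b2, b3, b4, b5, b6⟩ := hbnds a ha
    show p.bval r c = some a
    rw [bval_eq_pix p (by omega) (by omega) (by omega) (by omega),
      key a ha r c hq1 hq2 hq3 hq4]
  · ext ⟨r, c⟩
    constructor
    · rintro ⟨d, ⟨a, ha, rfl⟩, hq1, hq2, hq3, hq4⟩
      obtain ⟨b1, b2, b3, b4, b5, b6⟩ := hbnds a ha
      exact ⟨by omega, by omega, by omega, by omega⟩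
    · rintro ⟨hq1, hq2, hq3, hq4⟩
      have ha : occ (pix p r c) := ⟨r, c, hq1, hq2, hq3, hq4, rfl⟩
      obtain ⟨b1, b2, b3, b4⟩ := hmem (pix p r c) r c hq1 hq2 hq3 hq4 rfl
      exact ⟨_, ⟨pix p r c, ha, rfl⟩, b1, b2, b3, b4⟩
  · rintro d ⟨a, ha, rfl⟩ e ⟨b, hb, rfl⟩ hne
    ext ⟨r, c⟩
    simp only [Set.mem_inter_iff, Set.mem_empty_iff_false, iff_false]
    rintro ⟨⟨hq1, hq2, hq3, hq4⟩, ⟨hq1', hq2', hq3', hq4'⟩⟩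
    obtain ⟨b1, b2, b3, b4, b5, b6⟩ := hbnds a ha
    have e1 : pix p r c = a := key a ha r c hq1 hq2 hq3 hq4
    have e2 : pix p r c = b := key b hb r c hq1' hq2' hq3' hq4'
    exact hne (by rw [e1.symm.trans e2])
  · rintro d ⟨a, ha, rfl⟩ e ⟨b, hb, rfl⟩ hne C₁ C₂ h₁ h₂
    obtain ⟨b1, b2, b3, b4, b5, b6⟩ := hbnds a ha
    obtain ⟨c1', c2', c3', c4', c5', c6'⟩ := hbnds b hb
    have e1 : C₁ = some a := by
      have := h₁ (i0 a, j0 a) ⟨le_rfl, b2, le_rfl, b5⟩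
      rw [← this]
      show p.bval (i0 a) (j0 a) = some a
      rw [bval_eq_pix p (by omega) (by omega) (by omega) (by omega),
        key a ha _ _ le_rfl b2 le_rfl b5]
    have e2 : C₂ = some b := by
      have := h₂ (i0 b, j0 b) ⟨le_rfl, c2', le_rfl, c5'⟩
      rw [← this]
      show p.bval (i0 b) (j0 b) = some b
      rw [bval_eq_pix p (by omega) (by omega) (by omega) (by omega),
        key b hb _ _ le_rfl c2' le_rfl c5']
    rw [e1, e2]
    intro hab
    exact hne (by rw [Option.some_injective _ hab])

end PicAux

namespace Peel

variable {A : Type*}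

/-- Horizontal adjacency edge for an abstract labelling `g`. -/
def Eh (m n : ℕ) (g : ℕ → ℕ → A) (a b : A) : Prop :=
  a ≠ b ∧ ∃ r c, (1 ≤ r ∧ r ≤ m ∧ 1 ≤ c ∧ c + 1 ≤ n) ∧ g r c = a ∧ g r (c + 1) = b

/-- Vertical adjacency edge for an abstract labelling `g`. -/
def Ev (m n : ℕ) (g : ℕ → ℕ → A) (a b : A) : Prop :=
  a ≠ b ∧ ∃ r c, (1 ≤ r ∧ r + 1 ≤ m ∧ 1 ≤ c ∧ c ≤ n) ∧ g r c = a ∧ g (r + 1) c = b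

/-- The class-structure hypothesis: every cell's label-class is the full rectangle
given by `r1 c1 r2 c2`. -/
def RectStruct (m n : ℕ) (g : ℕ → ℕ → A) (r1 c1 r2 c2 : A → ℕ) : Prop :=
  (∀ r c, 1 ≤ r → r ≤ m → 1 ≤ c → c ≤ n →
    1 ≤ r1 (g r c) ∧ r1 (g r c) ≤ r ∧ r ≤ r2 (g r c) ∧ r2 (g r c) ≤ m ∧
    1 ≤ c1 (g r c) ∧ c1 (g r c) ≤ c ∧ c ≤ c2 (g r c) ∧ c2 (g r c) ≤ n) ∧
  (∀ r c, 1 ≤ r → r ≤ m → 1 ≤ c → c ≤ n → ∀ r' c', 1 ≤ r' → r' ≤ m → 1 ≤ c' → c' ≤ n →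
    r1 (g r c) ≤ r' → r' ≤ r2 (g r c) → c1 (g r c) ≤ c' → c' ≤ c2 (g r c) →
    g r' c' = g r c)

/-- Corner-rectangle existence: descending induction on the left edge. -/
lemma aux (m n : ℕ) (g : ℕ → ℕ → A) (r1 c1 r2 c2 : A → ℕ)
    (hRS : RectStruct m n g r1 c1 r2 c2) (T : Finset A) (lam : ℕ → ℕ)
    (hanti : ∀ r r', r ≤ r' → r' ≤ m → lam r' ≤ lam r)
    (hocc : ∀ a ∈ T, ∃ r c, (1 ≤ r ∧ r ≤ m ∧ 1 ≤ c ∧ c ≤ n) ∧ lam r < c ∧ g r c = a)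
    (hTS : ∀ r c, 1 ≤ r → r ≤ m → 1 ≤ c → c ≤ n → lam r < c → g r c ∈ T)
    (hST : ∀ a ∈ T, ∀ r c, 1 ≤ r → r ≤ m → 1 ≤ c → c ≤ n → g r c = a → lam r < c) :
    ∀ k t, t ∈ T → c1 t ≤ k → c2 t ≤ lam (r1 t - 1) →
    ∃ t' ∈ T, (∀ r, r1 t' ≤ r → r ≤ r2 t' → lam r + 1 = c1 t') ∧ c2 t' ≤ lam (r1 t' - 1) := by
  classical
  obtain ⟨hmem, hfill⟩ := hRS
  intro k
  induction k with
  | zero =>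
    intro t ht hk hV
    obtain ⟨rt, ct, ⟨hd1, hd2, hd3, hd4⟩, _, hgt⟩ := hocc t ht
    have := hmem rt ct hd1 hd2 hd3 hd4
    rw [hgt] at this
    omega
  | succ k ih =>
    intro t ht hk hV
    -- basic facts about t's rectangle
    obtain ⟨rt, ct, ⟨hd1, hd2, hd3, hd4⟩, _, hgt⟩ := hocc t ht
    have hbt := hmem rt ct hd1 hd2 hd3 hd4
    rw [hgt] at hbt
    have hcell : ∀ r c, r1 t ≤ r → r ≤ r2 t → c1 t ≤ c → c ≤ c2 t → g r c = t := by
      intro r c h1 h2 h3 h4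
      have := hfill rt ct hd1 hd2 hd3 hd4 r c (by omega) (by omega) (by omega) (by omega)
        (by rw [hgt]; omega) (by rw [hgt]; omega) (by rw [hgt]; omega) (by rw [hgt]; omega)
      rw [this, hgt]
    have hlamlt : ∀ r, r1 t ≤ r → r ≤ r2 t → lam r < c1 t := by
      intro r h1 h2
      exact hST t ht r (c1 t) (by omega) (by omega) (by omega) (by omega)
        (hcell r (c1 t) h1 h2 le_rfl (by omega))
    by_cases hH : ∀ r, r1 t ≤ r → r ≤ r2 t → lam r + 1 = c1 t
    · exact ⟨t, ht, hH, hV⟩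
    · push_neg at hH
      have hex : ∃ r, r1 t ≤ r ∧ r ≤ r2 t ∧ lam r + 1 < c1 t := by
        obtain ⟨r, h1, h2, h3⟩ := hH
        exact ⟨r, h1, h2, by have := hlamlt r h1 h2; omega⟩
      set S : Set ℕ := {r | r1 t ≤ r ∧ r ≤ r2 t ∧ lam r + 1 < c1 t} with hSdef
      have hSne : S.Nonempty := hex
      set r' := sInf S with hr'def
      have hrmem : r' ∈ S := Nat.sInf_mem hSne
      obtain ⟨hra, hrb, hrc⟩ := hrmem
      have hprev : ∀ r, r1 t ≤ r → r < r' → c1 t ≤ lam r + 1 := by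
        intro r h1 h2
        have hnot : r ∉ S := Nat.notMem_of_lt_sInf h2
        rcases Nat.lt_or_ge (lam r + 1) (c1 t) with hlt | hge
        · exact absurd ⟨h1, by omega, hlt⟩ hnot
        · exact hge
      -- the new rectangle u
      have hdomu : 1 ≤ r' ∧ r' ≤ m ∧ 1 ≤ lam r' + 1 ∧ lam r' + 1 ≤ n := by
        refine ⟨by omega, by omega, by omega, by omega⟩
      set u := g r' (lam r' + 1) with hudef
      have hu : u ∈ T := hTS r' (lam r' + 1) hdomu.1 hdomu.2.1 hdomu.2.2.1 hdomu.2.2.2 (by omega)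
      have hbu := hmem r' (lam r' + 1) hdomu.1 hdomu.2.1 hdomu.2.2.1 hdomu.2.2.2
      rw [← hudef] at hbu
      have hucell : ∀ r c, r1 u ≤ r → r ≤ r2 u → c1 u ≤ c → c ≤ c2 u →
          (1 ≤ r ∧ r ≤ m ∧ 1 ≤ c ∧ c ≤ n) → g r c = u := by
        intro r c h1 h2 h3 h4 ⟨e1, e2, e3, e4⟩
        have := hfill r' (lam r' + 1) hdomu.1 hdomu.2.1 hdomu.2.2.1 hdomu.2.2.2
          r c e1 e2 e3 e4 (by rw [← hudef]; omega) (by rw [← hudef]; omega)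
          (by rw [← hudef]; omega) (by rw [← hudef]; omega)
        rw [this, hudef]
      have hc1u : c1 u = lam r' + 1 := by
        rcases Nat.lt_or_ge (c1 u) (lam r' + 1) with hlt | hge
        · have hg := hucell r' (c1 u) (by omega) (by omega) le_rfl (by omega)
            ⟨by omega, by omega, by omega, by omega⟩
          have := hST u hu r' (c1 u) (by omega) (by omega) (by omega) (by omega) hg
          omega
        · omega
      -- lam (r' - 1) is large
      have hlamprev : lam r' + 1 < lam (r' - 1) + 1 := by
        rcases Nat.eq_or_lt_of_le hra with heq | hlt
        · -- r' = r1 t : use the V-condition of t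
          rw [heq] at hV
          have : c1 t ≤ c2 t := by omega
          omega
        · have := hprev (r' - 1) (by omega) (by omega)
          omega
      have hr1u : r1 u = r' := by
        rcases Nat.eq_or_lt_of_le hbu.2.1 with heq | hlt
        · omega
        · exfalso
          have h1r : 1 ≤ r' - 1 := by omega
          have hg := hucell (r' - 1) (lam r' + 1) (by omega) (by omega) (by omega) (by omega)
            ⟨by omega, by omega, by omega, by omega⟩
          have := hST u hu (r' - 1) (lam r' + 1) (by omega) (by omega) (by omega) (by omega) hg
          omega
      have hc2u : c2 u < c1 t := by
        rcases Nat.lt_or_ge (c2 u) (c1 t) with hlt | hge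
        · exact hlt
        · exfalso
          have hg1 := hucell r' (c1 t) (by omega) (by omega) (by omega) hge
            ⟨by omega, by omega, by omega, by omega⟩
          have hg2 := hcell r' (c1 t) hra hrb le_rfl (by omega)
          rw [hg2] at hg1
          -- t = u, but c1 u < c1 t
          rw [← hg1] at hc1u
          omega
      have hVu : c2 u ≤ lam (r1 u - 1) := by
        rw [hr1u]
        rcases Nat.eq_or_lt_of_le hra with heq | hlt
        · rw [heq] at hV
          omega
        · have := hprev (r' - 1) (by omega) (by omega)
          omega
      exact ih u hu (by omega) hVu


lemma peel (m n : ℕ) (g : ℕ → ℕ → A) (r1 c1 r2 c2 : A → ℕ)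
    (hRS : RectStruct m n g r1 c1 r2 c2) :
    ∀ k (T : Finset A) (lam : ℕ → ℕ), T.card ≤ k →
    (∀ r r', r ≤ r' → r' ≤ m → lam r' ≤ lam r) →
    (n ≤ lam 0) →
    (∀ a ∈ T, ∃ r c, (1 ≤ r ∧ r ≤ m ∧ 1 ≤ c ∧ c ≤ n) ∧ lam r < c ∧ g r c = a) →
    (∀ r c, 1 ≤ r → r ≤ m → 1 ≤ c → c ≤ n → lam r < c → g r c ∈ T) →
    (∀ a ∈ T, ∀ r c, 1 ≤ r → r ≤ m → 1 ≤ c → c ≤ n → g r c = a → lam r < c) →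
    ∃ φ : A → ℕ, ∀ a ∈ T, ∀ b ∈ T, Eh m n g a b ∨ Ev m n g a b → φ a < φ b := by
  classical
  obtain ⟨hmem, hfill⟩ := hRS
  intro k
  induction k with
  | zero =>
    intro T lam hcard _ _ _ _ _
    have : T = ∅ := Finset.card_eq_zero.mp (by omega)
    subst this
    exact ⟨fun _ => 0, by simp⟩
  | succ k ih =>
    intro T lam hcard hanti hlam0 hocc hTS hST
    rcases T.eq_empty_or_nonempty with rfl | ⟨a0, ha0⟩
    · exact ⟨fun _ => 0, by simp⟩
    -- find the topmost nonempty row r*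
    obtain ⟨ra, ca, ⟨hda1, hda2, hda3, hda4⟩, hSa, hga⟩ := hocc a0 ha0
    have hS0ne : {r | lam r < n}.Nonempty := ⟨ra, show lam ra < n by omega⟩
    set rs := sInf {r | lam r < n} with hrsdef
    have hrsmem : lam rs < n := Nat.sInf_mem hS0ne
    have hrsmin : ∀ r, r < rs → n ≤ lam r := by
      intro r hr
      by_contra hc
      exact absurd (Nat.sInf_le (show r ∈ {r | lam r < n} by simp only [Set.mem_setOf_eq]; omega)) (by omega)
    have hrs1 : 1 ≤ rs := by
      rcases Nat.eq_zero_or_pos rs with h0 | h1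
      · rw [h0] at hrsmem; omega
      · exact h1
    have hrsm : rs ≤ m := le_trans (Nat.sInf_le (show ra ∈ {r | lam r < n} by simp only [Set.mem_setOf_eq]; omega)) hda2
    -- the top-left corner rectangle t₀
    set t0 := g rs (lam rs + 1) with ht0def
    have hdt0 : 1 ≤ rs ∧ rs ≤ m ∧ 1 ≤ lam rs + 1 ∧ lam rs + 1 ≤ n :=
      ⟨hrs1, hrsm, by omega, by omega⟩
    have ht0 : t0 ∈ T := hTS rs (lam rs + 1) hdt0.1 hdt0.2.1 hdt0.2.2.1 hdt0.2.2.2 (by omega)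
    have hbt0 := hmem rs (lam rs + 1) hdt0.1 hdt0.2.1 hdt0.2.2.1 hdt0.2.2.2
    rw [← ht0def] at hbt0
    have hr1t0 : r1 t0 = rs := by
      rcases Nat.eq_or_lt_of_le hbt0.2.1 with heq | hlt
      · omega
      · exfalso
        have hg := hfill rs (lam rs + 1) hdt0.1 hdt0.2.1 hdt0.2.2.1 hdt0.2.2.2
          (rs - 1) (lam rs + 1) (by omega) (by omega) (by omega) (by omega)
          (by rw [← ht0def]; omega) (by rw [← ht0def]; omega)
          (by rw [← ht0def]; omega) (by rw [← ht0def]; omega)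
        rw [← ht0def] at hg
        have := hST t0 ht0 (rs - 1) (lam rs + 1) (by omega) (by omega) (by omega) (by omega) hg
        have := hrsmin (rs - 1) (by omega)
        omega
    have hVt0 : c2 t0 ≤ lam (r1 t0 - 1) := by
      rw [hr1t0]
      have := hrsmin (rs - 1) (by omega)
      omega
    -- get a corner-source rectangle t
    obtain ⟨t, ht, hH, hV⟩ := aux m n g r1 c1 r2 c2 ⟨hmem, hfill⟩ T lam hanti hocc hTS hST
      (c1 t0) t0 ht0 le_rfl hVt0
    -- facts about t
    obtain ⟨rt, ct, ⟨he1, he2, he3, he4⟩, _, hgt⟩ := hocc t ht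
    have hbt := hmem rt ct he1 he2 he3 he4
    rw [hgt] at hbt
    have hcell : ∀ r c, r1 t ≤ r → r ≤ r2 t → c1 t ≤ c → c ≤ c2 t → g r c = t := by
      intro r c h1 h2 h3 h4
      have := hfill rt ct he1 he2 he3 he4 r c (by omega) (by omega) (by omega) (by omega)
        (by rw [hgt]; omega) (by rw [hgt]; omega) (by rw [hgt]; omega) (by rw [hgt]; omega)
      rw [this, hgt]
    -- t is a source within T
    have hsrc : ∀ a ∈ T, ¬ (Eh m n g a t ∨ Ev m n g a t) := by
      rintro a ha (⟨hne, r, c, ⟨e1, e2, e3, e4⟩, hga', hgt'⟩ | ⟨hne, r, c, ⟨e1, e2, e3, e4⟩, hga', hgt'⟩)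
      · have hb := hmem r (c + 1) e1 e2 (by omega) e4
        rw [hgt'] at hb
        have hlr := hST a ha r c e1 e2 e3 (by omega) hga'
        have hc1 := hH r hb.2.1 hb.2.2.1
        have : g r c = t := hcell r c hb.2.1 hb.2.2.1 (by omega) (by omega)
        exact hne (by rw [← hga', this])
      · have hb := hmem (r + 1) c (by omega) e2 e3 e4
        rw [hgt'] at hb
        have hlr := hST a ha r c e1 (by omega) e3 e4 hga'
        rcases Nat.eq_or_lt_of_le hb.2.1 with heq | hlt
        · -- r + 1 = r1 t : contradicts the V-condition
          have : lam (r1 t - 1) = lam r := by rw [heq]; congr 1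
          omega
        · have : g r c = t := hcell r c (by omega) (by omega) hb.2.2.2.2.2.1 (by omega)
          exact hne (by rw [← hga', this])
    -- peel t off
    set lam' : ℕ → ℕ := fun r => if r1 t ≤ r ∧ r ≤ r2 t then c2 t else lam r with hlam'def
    have lam'_in : ∀ r, r1 t ≤ r → r ≤ r2 t → lam' r = c2 t := by
      intro r h1 h2; simp only [hlam'def, if_pos (⟨h1, h2⟩ : r1 t ≤ r ∧ r ≤ r2 t)]
    have lam'_out : ∀ r, ¬ (r1 t ≤ r ∧ r ≤ r2 t) → lam' r = lam r := by
      intro r h; simp only [hlam'def, if_neg h]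
    have lam'_ge : ∀ r, lam r ≤ lam' r := by
      intro r
      by_cases hb' : r1 t ≤ r ∧ r ≤ r2 t
      · rw [lam'_in r hb'.1 hb'.2]
        have := hH r hb'.1 hb'.2
        omega
      · rw [lam'_out r hb']
    have hanti' : ∀ r r', r ≤ r' → r' ≤ m → lam' r' ≤ lam' r := by
      intro r r' hrr' hr'm
      by_cases hbr : r1 t ≤ r ∧ r ≤ r2 t <;> by_cases hbr' : r1 t ≤ r' ∧ r' ≤ r2 t
      · rw [lam'_in r hbr.1 hbr.2, lam'_in r' hbr'.1 hbr'.2]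
      · rw [lam'_in r hbr.1 hbr.2, lam'_out r' hbr']
        have h2 : r2 t < r' := by omega
        have := hanti (r2 t) r' (by omega) hr'm
        have := hH (r2 t) (by omega) le_rfl
        omega
      · rw [lam'_out r hbr, lam'_in r' hbr'.1 hbr'.2]
        have h1 : r < r1 t := by omega
        have := hanti r (r1 t - 1) (by omega) (by omega)
        omega
      · rw [lam'_out r hbr, lam'_out r' hbr']
        exact hanti r r' hrr' hr'm
    have hlam0' : n ≤ lam' 0 := by
      rw [lam'_out 0 (by omega)]
      exact hlam0
    -- cells of remaining rectangles lie beyond the band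
    have hbeyond : ∀ a ∈ T, a ≠ t → ∀ r c, 1 ≤ r → r ≤ m → 1 ≤ c → c ≤ n →
        g r c = a → lam' r < c := by
      intro a ha hne r c f1 f2 f3 f4 hg
      have hlr := hST a ha r c f1 f2 f3 f4 hg
      by_cases hb' : r1 t ≤ r ∧ r ≤ r2 t
      · rw [lam'_in r hb'.1 hb'.2]
        rcases Nat.lt_or_ge (c2 t) c with h | h
        · exact h
        · exfalso
          have hc1 := hH r hb'.1 hb'.2
          have : g r c = t := hcell r c hb'.1 hb'.2 (by omega) h
          exact hne (by rw [← hg, this])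
      · rw [lam'_out r hb']; exact hlr
    have hocc' : ∀ a ∈ T.erase t, ∃ r c, (1 ≤ r ∧ r ≤ m ∧ 1 ≤ c ∧ c ≤ n) ∧
        lam' r < c ∧ g r c = a := by
      intro a ha
      obtain ⟨r, c, hd, _, hg⟩ := hocc a (Finset.mem_of_mem_erase ha)
      exact ⟨r, c, hd, hbeyond a (Finset.mem_of_mem_erase ha) (Finset.ne_of_mem_erase ha)
        r c hd.1 hd.2.1 hd.2.2.1 hd.2.2.2 hg, hg⟩
    have hTS' : ∀ r c, 1 ≤ r → r ≤ m → 1 ≤ c → c ≤ n → lam' r < c → g r c ∈ T.erase t := by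
      intro r c f1 f2 f3 f4 hl
      have hl0 : lam r < c := by have := lam'_ge r; omega
      refine Finset.mem_erase.mpr ⟨?_, hTS r c f1 f2 f3 f4 hl0⟩
      intro hgt'
      have hb := hmem r c f1 f2 f3 f4
      rw [hgt'] at hb
      have := lam'_in r hb.2.1 hb.2.2.1
      omega
    have hST' : ∀ a ∈ T.erase t, ∀ r c, 1 ≤ r → r ≤ m → 1 ≤ c → c ≤ n →
        g r c = a → lam' r < c := by
      intro a ha r c f1 f2 f3 f4 hg
      exact hbeyond a (Finset.mem_of_mem_erase ha) (Finset.ne_of_mem_erase ha) r c f1 f2 f3 f4 hg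
    have hcard' : (T.erase t).card ≤ k := by
      have := Finset.card_erase_of_mem ht
      have hpos := Finset.card_pos.mpr ⟨t, ht⟩
      omega
    obtain ⟨φ', hφ'⟩ := ih (T.erase t) lam' hcard' hanti' hlam0' hocc' hTS' hST'
    refine ⟨fun a => if a = t then 0 else φ' a + 1, ?_⟩
    intro a ha b hb hedge
    by_cases hbt' : b = t
    · exact absurd (by rwa [hbt'] at hedge) (hsrc a ha)
    by_cases hat : a = t
    · simp only [if_pos hat, if_neg hbt']
      omega
    · simp only [if_neg hat, if_neg hbt']
      have := hφ' a (Finset.mem_erase.mpr ⟨hat, ha⟩) b (Finset.mem_erase.mpr ⟨hbt', hb⟩) hedge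
      omega

/-- The global rank function for a rectangular-class labelling. -/
lemma rank (m n : ℕ) (g : ℕ → ℕ → A) (r1 c1 r2 c2 : A → ℕ)
    (hRS : RectStruct m n g r1 c1 r2 c2) :
    ∃ φ : A → ℕ, ∀ a b, Eh m n g a b ∨ Ev m n g a b → φ a < φ b := by
  classical
  set T0 : Finset A :=
    ((Finset.Icc 1 m) ×ˢ (Finset.Icc 1 n)).image (fun q : ℕ × ℕ => g q.1 q.2) with hT0
  have hmemT0 : ∀ r c, 1 ≤ r → r ≤ m → 1 ≤ c → c ≤ n → g r c ∈ T0 := by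
    intro r c f1 f2 f3 f4
    exact Finset.mem_image.mpr ⟨(r, c), Finset.mem_product.mpr
      ⟨Finset.mem_Icc.mpr ⟨f1, f2⟩, Finset.mem_Icc.mpr ⟨f3, f4⟩⟩, rfl⟩
  set lam0 : ℕ → ℕ := fun r => if r = 0 then n else 0 with hlam0def
  have hanti0 : ∀ r r', r ≤ r' → r' ≤ m → lam0 r' ≤ lam0 r := by
    intro r r' hrr' _
    simp only [hlam0def]
    by_cases h0 : r' = 0
    · simp [h0, show r = 0 by omega]
    · by_cases h1 : r = 0 <;> simp [h0, h1]
  have hl00 : n ≤ lam0 0 := by simp [hlam0def]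
  have hocc0 : ∀ a ∈ T0, ∃ r c, (1 ≤ r ∧ r ≤ m ∧ 1 ≤ c ∧ c ≤ n) ∧ lam0 r < c ∧ g r c = a := by
    intro a ha
    obtain ⟨⟨r, c⟩, hq, rfl⟩ := Finset.mem_image.mp ha
    obtain ⟨h1, h2⟩ := Finset.mem_product.mp hq
    obtain ⟨f1, f2⟩ := Finset.mem_Icc.mp h1
    obtain ⟨f3, f4⟩ := Finset.mem_Icc.mp h2
    refine ⟨r, c, ⟨f1, f2, f3, f4⟩, ?_, rfl⟩
    simp only [hlam0def, if_neg (by omega : ¬ r = 0)]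
    omega
  have hTS0 : ∀ r c, 1 ≤ r → r ≤ m → 1 ≤ c → c ≤ n → lam0 r < c → g r c ∈ T0 := by
    intro r c f1 f2 f3 f4 _
    exact hmemT0 r c f1 f2 f3 f4
  have hST0 : ∀ a ∈ T0, ∀ r c, 1 ≤ r → r ≤ m → 1 ≤ c → c ≤ n → g r c = a → lam0 r < c := by
    intro a _ r c f1 f2 f3 f4 _
    simp only [hlam0def, if_neg (by omega : ¬ r = 0)]
    omega
  obtain ⟨φ, hφ⟩ := peel m n g r1 c1 r2 c2 hRS T0.card T0 lam0 le_rfl hanti0 hl00 hocc0 hTS0 hST0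
  refine ⟨φ, ?_⟩
  rintro a b (⟨hne, r, c, ⟨e1, e2, e3, e4⟩, hga, hgb⟩ | ⟨hne, r, c, ⟨e1, e2, e3, e4⟩, hga, hgb⟩)
  · refine hφ a ?_ b ?_ (Or.inl ⟨hne, r, c, ⟨e1, e2, e3, e4⟩, hga, hgb⟩)
    · rw [← hga]; exact hmemT0 r c e1 e2 e3 (by omega)
    · rw [← hgb]; exact hmemT0 r (c + 1) e1 e2 (by omega) e4
  · refine hφ a ?_ b ?_ (Or.inr ⟨hne, r, c, ⟨e1, e2, e3, e4⟩, hga, hgb⟩)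
    · rw [← hga]; exact hmemT0 r c e1 (by omega) e3 e4
    · rw [← hgb]; exact hmemT0 (r + 1) c (by omega) e2 e3 e4
end Peel

namespace PicAux

variable {A : Type*}

lemma acyclic_of_rank {α : Type*} {r : α → α → Prop} (φ : α → ℕ)
    (h : ∀ a b, r a b → φ a < φ b) : RelAcyclic r := by
  intro a ha
  have key : ∀ x y, Relation.TransGen r x y → φ x < φ y := by
    intro x y hxy
    induction hxy with
    | single h1 => exact h _ _ h1
    | tail _ h1 ih => exact lt_trans ih (h _ _ h1)
  exact lt_irrefl _ (key a a ha)

lemma hrel_cells {p : Pic A} {a b : A} (h : Hrel p.tiles (some a) (some b)) :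
    a ≠ b ∧ ∃ i j, (1 ≤ i ∧ i ≤ p.rows ∧ 1 ≤ j ∧ j + 1 ≤ p.cols) ∧
      pix p i j = a ∧ pix p i (j + 1) = b := by
  obtain ⟨hne, t, ⟨i, j, hi, hj, rfl⟩, hor⟩ := h
  have hne' : a ≠ b := fun he => hne (by rw [he])
  rcases hor with ⟨h1, h2⟩ | ⟨h1, h2⟩
  · obtain ⟨d1, d2, d3, d4⟩ := bval_some_dom p h1
    obtain ⟨e1, e2, e3, e4⟩ := bval_some_dom p h2
    exact ⟨hne', i, j, ⟨d1, d2, d3, e4⟩, bval_some_pix p h1, bval_some_pix p h2⟩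
  · obtain ⟨d1, d2, d3, d4⟩ := bval_some_dom p h1
    obtain ⟨e1, e2, e3, e4⟩ := bval_some_dom p h2
    exact ⟨hne', i + 1, j, ⟨d1, d2, d3, e4⟩, bval_some_pix p h1, bval_some_pix p h2⟩

lemma vrel_cells {p : Pic A} {a b : A} (h : Vrel p.tiles (some a) (some b)) :
    a ≠ b ∧ ∃ i j, (1 ≤ i ∧ i + 1 ≤ p.rows ∧ 1 ≤ j ∧ j ≤ p.cols) ∧
      pix p i j = a ∧ pix p (i + 1) j = b := by
  obtain ⟨hne, t, ⟨i, j, hi, hj, rfl⟩, hor⟩ := h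
  have hne' : a ≠ b := fun he => hne (by rw [he])
  rcases hor with ⟨h1, h2⟩ | ⟨h1, h2⟩
  · obtain ⟨d1, d2, d3, d4⟩ := bval_some_dom p h1
    obtain ⟨e1, e2, e3, e4⟩ := bval_some_dom p h2
    exact ⟨hne', i, j, ⟨d1, e2, d3, d4⟩, bval_some_pix p h1, bval_some_pix p h2⟩
  · obtain ⟨d1, d2, d3, d4⟩ := bval_some_dom p h1
    obtain ⟨e1, e2, e3, e4⟩ := bval_some_dom p h2
    exact ⟨hne', i, j + 1, ⟨d1, e2, d3, d4⟩, bval_some_pix p h1, bval_some_pix p h2⟩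

theorem tiles_simpleRegional {p : Pic A} (hreg : p.IsRegional) :
    SimpleRegional p.tiles := by
  classical
  obtain ⟨π, ⟨hsub, hrects, hhom, hcover, hdisj⟩, hrg⟩ := hreg
  set m := p.rows with hm
  set n := p.cols with hn
  set f : ℕ × ℕ → Option A := fun q => p.bval q.1 q.2 with hf
  -- every symbol class is a full rectangle
  have hQ : ∀ r c, 1 ≤ r → r ≤ m → 1 ≤ c → c ≤ n →
      ∃ z : ℕ × ℕ × ℕ × ℕ, 1 ≤ z.1 ∧ z.2.1 ≤ m ∧ 1 ≤ z.2.2.1 ∧ z.2.2.2 ≤ n ∧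
        ∀ r' c', 1 ≤ r' → r' ≤ m → 1 ≤ c' → c' ≤ n →
          (pix p r' c' = pix p r c ↔
            (z.1 ≤ r' ∧ r' ≤ z.2.1 ∧ z.2.2.1 ≤ c' ∧ c' ≤ z.2.2.2)) := by
    intro r c f1 f2 f3 f4
    have hq : (r, c) ∈ ⋃₀ π := by
      rw [hcover]; exact ⟨f1, f2, f3, f4⟩
    obtain ⟨d, hd, hqd⟩ := hq
    obtain ⟨x, y, x', y', b1, b2, b3, b4, b5, b6, rfl⟩ := hsub d hd
    obtain ⟨C, hC⟩ := hhom _ hd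
    have hCval : C = some (pix p r c) := by
      rw [← hC (r, c) hqd]
      exact bval_eq_pix p f1 f2 f3 f4
    refine ⟨(x, x', y, y'), b1, b3, b4, b6, ?_⟩
    intro r' c' f1' f2' f3' f4'
    constructor
    · intro hpx
      have hq' : (r', c') ∈ ⋃₀ π := by
        rw [hcover]; exact ⟨f1', f2', f3', f4'⟩
      obtain ⟨d', hd', hqd'⟩ := hq'
      obtain ⟨C', hC'⟩ := hhom _ hd'
      have hC'val : C' = some (pix p r c) := by
        rw [← hC' (r', c') hqd', ← hpx]
        exact bval_eq_pix p f1' f2' f3' f4'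
      have hdd : d' = rect x y x' y' := by
        by_contra hne
        exact hrg d' hd' _ hd hne C' C hC' hC (by rw [hC'val, hCval])
      rw [hdd] at hqd'
      exact hqd'
    · intro hb
      have hmem' : (r', c') ∈ rect x y x' y' := hb
      have := hC (r', c') hmem'
      rw [hCval] at this
      exact bval_some_pix p this
  -- choice of rectangle bounds per symbol
  set P : A → ℕ × ℕ × ℕ × ℕ → Prop := fun a z =>
    1 ≤ z.1 ∧ z.2.1 ≤ m ∧ 1 ≤ z.2.2.1 ∧ z.2.2.2 ≤ n ∧
    ∀ r' c', 1 ≤ r' → r' ≤ m → 1 ≤ c' → c' ≤ n →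
      (pix p r' c' = a ↔ (z.1 ≤ r' ∧ r' ≤ z.2.1 ∧ z.2.2.1 ≤ c' ∧ c' ≤ z.2.2.2)) with hP
  set bnd : A → ℕ × ℕ × ℕ × ℕ := fun a => if h : ∃ z, P a z then h.choose else (1, 0, 1, 0)
    with hbnddef
  have hbnd : ∀ a, (∃ z, P a z) → P a (bnd a) := by
    intro a h
    simp only [hbnddef, dif_pos h]
    exact h.choose_spec
  have hQ' : ∀ r c, 1 ≤ r → r ≤ m → 1 ≤ c → c ≤ n → ∃ z, P (pix p r c) z := by
    intro r c f1 f2 f3 f4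
    obtain ⟨z, hz⟩ := hQ r c f1 f2 f3 f4
    exact ⟨z, hz⟩
  -- rectangle structure for the picture and its mirror image
  have RS1 : Peel.RectStruct m n (fun r c => pix p r c)
      (fun a => (bnd a).1) (fun a => (bnd a).2.2.1) (fun a => (bnd a).2.1)
      (fun a => (bnd a).2.2.2) := by
    constructor
    · intro r c f1 f2 f3 f4
      have hp' := hbnd _ (hQ' r c f1 f2 f3 f4)
      have hb := (hp'.2.2.2.2 r c f1 f2 f3 f4).mp rfl
      exact ⟨hp'.1, hb.1, hb.2.1, hp'.2.1, hp'.2.2.1, hb.2.2.1, hb.2.2.2, hp'.2.2.2.1⟩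
    · intro r c f1 f2 f3 f4 r' c' g1 g2 g3 g4 k1 k2 k3 k4
      exact ((hbnd _ (hQ' r c f1 f2 f3 f4)).2.2.2.2 r' c' g1 g2 g3 g4).mpr ⟨k1, k2, k3, k4⟩
  have RS2 : Peel.RectStruct m n (fun r c => pix p r (n + 1 - c))
      (fun a => (bnd a).1) (fun a => n + 1 - (bnd a).2.2.2) (fun a => (bnd a).2.1)
      (fun a => n + 1 - (bnd a).2.2.1) := by
    constructor
    · intro r c f1 f2 f3 f4
      have hd1 : 1 ≤ n + 1 - c := by omega
      have hd2 : n + 1 - c ≤ n := by omega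
      have hp' := hbnd _ (hQ' r (n + 1 - c) f1 f2 hd1 hd2)
      have hb := (hp'.2.2.2.2 r (n + 1 - c) f1 f2 hd1 hd2).mp rfl
      obtain ⟨q1, q2, q3, q4, -⟩ := hp'
      obtain ⟨w1, w2, w3, w4⟩ := hb
      refine ⟨q1, w1, w2, q2, ?_, ?_, ?_, ?_⟩
      · show 1 ≤ n + 1 - (bnd (pix p r (n + 1 - c))).2.2.2
        omega
      · show n + 1 - (bnd (pix p r (n + 1 - c))).2.2.2 ≤ c
        omega
      · show c ≤ n + 1 - (bnd (pix p r (n + 1 - c))).2.2.1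
        omega
      · show n + 1 - (bnd (pix p r (n + 1 - c))).2.2.1 ≤ n
        omega
    · intro r c f1 f2 f3 f4 r' c' g1 g2 g3 g4 k1 k2 k3 k4
      have hd1 : 1 ≤ n + 1 - c := by omega
      have hd2 : n + 1 - c ≤ n := by omega
      have hp' := hbnd _ (hQ' r (n + 1 - c) f1 f2 hd1 hd2)
      have hd1' : 1 ≤ n + 1 - c' := by omega
      have hd2' : n + 1 - c' ≤ n := by omega
      have hk3 : n + 1 - (bnd (pix p r (n + 1 - c))).2.2.2 ≤ c' := k3
      have hk4 : c' ≤ n + 1 - (bnd (pix p r (n + 1 - c))).2.2.1 := k4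
      have hq3 : 1 ≤ (bnd (pix p r (n + 1 - c))).2.2.1 := hp'.2.2.1
      have hq4 : (bnd (pix p r (n + 1 - c))).2.2.2 ≤ n := hp'.2.2.2.1
      exact (hp'.2.2.2.2 r' (n + 1 - c') g1 g2 hd1' hd2').mpr
        ⟨k1, k2, by omega, by omega⟩
  obtain ⟨φ1, hφ1⟩ := Peel.rank m n (fun r c => pix p r c) _ _ _ _ RS1
  obtain ⟨φ2, hφ2⟩ := Peel.rank m n (fun r c => pix p r (n + 1 - c)) _ _ _ _ RS2
  constructor
  · refine acyclic_of_rank φ1 ?_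
    rintro a b (hH | hV)
    · obtain ⟨hne, i, j, hd, h1, h2⟩ := hrel_cells hH
      exact hφ1 a b (Or.inl ⟨hne, i, j, hd, h1, h2⟩)
    · obtain ⟨hne, i, j, hd, h1, h2⟩ := vrel_cells hV
      exact hφ1 a b (Or.inr ⟨hne, i, j, hd, h1, h2⟩)
  · refine acyclic_of_rank φ2 ?_
    rintro a b (hH | hV)
    · -- Hrel θ (some b) (some a) : b sits immediately left of a
      obtain ⟨hne, i, j, ⟨d1, d2, d3, d4⟩, h1, h2⟩ := hrel_cells hH
      refine hφ2 a b (Or.inl ⟨hne.symm, i, n - j, ⟨d1, d2, by omega, by omega⟩, ?_, ?_⟩)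
      · show pix p i (n + 1 - (n - j)) = a
        have e : n + 1 - (n - j) = j + 1 := by omega
        rw [e]; exact h2
      · show pix p i (n + 1 - (n - j + 1)) = b
        have e : n + 1 - (n - j + 1) = j := by omega
        rw [e]; exact h1
    · obtain ⟨hne, i, j, ⟨d1, d2, d3, d4⟩, h1, h2⟩ := vrel_cells hV
      refine hφ2 a b (Or.inr ⟨hne, i, n + 1 - j, ⟨d1, d2, by omega, by omega⟩, ?_, ?_⟩)
      · show pix p i (n + 1 - (n + 1 - j)) = a
        have e : n + 1 - (n + 1 - j) = j := by omega
        rw [e]; exact h1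
      · show pix p (i + 1) (n + 1 - (n + 1 - j)) = b
        have e : n + 1 - (n + 1 - j) = j := by omega
        rw [e]; exact h2

end PicAux

namespace PicAux

variable {A : Type*}

lemma tiles_nonempty (p : Pic A) : p.tiles.Nonempty :=
  ⟨_, 0, 0, Nat.zero_le _, Nat.zero_le _, rfl⟩

lemma loc_empty : LOC (∅ : Set (Tile A)) = ∅ := by
  ext p
  simp only [LOC, Set.mem_setOf_eq, Set.mem_empty_iff_false, iff_false]
  intro h
  obtain ⟨t, ht⟩ := tiles_nonempty p
  exact h ht

lemma sr_empty : SimpleRegional (∅ : Set (Tile A)) := by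
  constructor <;>
  · refine acyclic_of_rank (fun _ => 0) ?_
    rintro a b (⟨_, t, ht, _⟩ | ⟨_, t, ht, _⟩) <;> exact absurd ht (Set.notMem_empty t)

end PicAux

/-- A local picture language `L = LOC(θ)` is regional (all its
pictures are regional) iff there exist finitely many simple regional tile sets
`θ₁, …, θₙ` (`n ≥ 1`) such that `L = ⋃ᵢ LOC(θᵢ)`. -/
theorem local_language_regional_iff_union_simple_regional {A : Type*}
    (θ : Set (Tile A)) (hθ : θ.Finite) :
    (∀ p ∈ LOC θ, p.IsRegional) ↔
      ∃ n : ℕ, 1 ≤ n ∧ ∃ θs : Fin n → Set (Tile A),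
        (∀ i, (θs i).Finite ∧ SimpleRegional (θs i)) ∧
        LOC θ = ⋃ i, LOC (θs i) := by
  classical
  constructor
  · intro h
    set F : Set (Set (Tile A)) := insert ∅ {s | ∃ p ∈ LOC θ, s = Pic.tiles p} with hFdef
    have hF : F.Finite := by
      refine Set.Finite.subset hθ.finite_subsets ?_
      rintro s (rfl | ⟨p, hp, rfl⟩)
      · exact Set.empty_subset θ
      · exact hp
    set l := hF.toFinset.toList with hldef
    have hlne : 1 ≤ l.length := by
      rw [hldef, Finset.length_toList]
      exact Finset.card_pos.mpr ⟨∅, hF.mem_toFinset.mpr (Set.mem_insert _ _)⟩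
    refine ⟨l.length, hlne, fun i => l.get i, ?_, ?_⟩
    · intro i
      have hmem : l.get i ∈ F := hF.mem_toFinset.mp (Finset.mem_toList.mp (l.get_mem i))
      show (l.get i).Finite ∧ SimpleRegional (l.get i)
      rcases Set.mem_insert_iff.mp hmem with heq | ⟨p, hp, hpt⟩
      · rw [heq]
        exact ⟨Set.finite_empty, PicAux.sr_empty⟩
      · rw [hpt]
        exact ⟨hθ.subset hp, PicAux.tiles_simpleRegional (h p hp)⟩
    · ext q
      simp only [Set.mem_iUnion]
      constructor
      · intro hq
        have hmem : Pic.tiles q ∈ F := Set.mem_insert_iff.mpr (Or.inr ⟨q, hq, rfl⟩)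
        have hql : Pic.tiles q ∈ l := Finset.mem_toList.mpr (hF.mem_toFinset.mpr hmem)
        obtain ⟨i, hi⟩ := List.mem_iff_get.mp hql
        exact ⟨i, by rw [hi]; exact fun t ht => ht⟩
      · rintro ⟨i, hqi⟩
        have hmem : l.get i ∈ F := hF.mem_toFinset.mp (Finset.mem_toList.mp (l.get_mem i))
        rcases Set.mem_insert_iff.mp hmem with heq | ⟨p, hp, hpt⟩
        · rw [heq, PicAux.loc_empty] at hqi
          exact absurd hqi (Set.notMem_empty q)
        · rw [hpt] at hqi
          exact fun t ht => hp (hqi ht)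
  · rintro ⟨n, hn, θs, hprop, hunion⟩ p hp
    rw [hunion] at hp
    obtain ⟨i, hpi⟩ := Set.mem_iUnion.mp hp
    exact PicAux.regional_of_simpleRegional (hprop i).2 hpi
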